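/- Let n ≥ 1, let (a_{αβ})_{α,β=1}^n be a constant symmetric matrix with all entries a_{αβ} > 0, and let (x_α, u_α, T_α) be a differentiable solution of the KB-CS model. Then at every time t: (d/dt) 𝒱(t)² = −(1/n) ∑_{α,β=1}^n a_{αβ} ‖u_β(t) − u_α(t)‖² ≤ 0, with equality if and only if u_α(t) = u_β(t) for all α, β; and (d/dt) ℰ(t)² = −(1/n) ∑_{α,β=1}^n a_{αβ} (E_β(t) − E_α(t))² ≤ 0, with equality if and only if E_α(t) = E_β(t) for all α, β. -/

import Mathlib

open RealInnerProductSpace Finset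

private lemma symm_swap {n : ℕ} (a : Fin n → Fin n → ℝ) (hs : ∀ α β, a α β = a β α)
    (f : Fin n → ℝ) : ∑ α, ∑ β, a α β * f β = ∑ α, ∑ β, a α β * f α := by
  rw [Finset.sum_comm]
  exact Finset.sum_congr rfl fun α _ => Finset.sum_congr rfl fun β _ => by rw [hs]

private lemma key_pair {n : ℕ} (a : Fin n → Fin n → ℝ) (hs : ∀ α β, a α β = a β α)
    (f : Fin n → ℝ) (g c : Fin n → Fin n → ℝ)
    (hgc : ∀ α β, 2 * (g α β - f α) + c α β = f β - f α) :
    ∑ α, ∑ β, a α β * (2 * (g α β - f α)) = -∑ α, ∑ β, a α β * c α β := by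
  have hsw := symm_swap a hs f
  have expand : ∑ α, ∑ β, (a α β * (2 * (g α β - f α)) + a α β * c α β)
      = ∑ α, ∑ β, (a α β * f β - a α β * f α) := by
    refine Finset.sum_congr rfl fun α _ => Finset.sum_congr rfl fun β _ => ?_
    linear_combination (a α β) * hgc α β
  simp only [Finset.sum_add_distrib, Finset.sum_sub_distrib] at expand
  linarith

private lemma neg_sum_zero_iff {n : ℕ} (hn : 1 ≤ n) (a : Fin n → Fin n → ℝ)
    (ha : ∀ α β, 0 < a α β) (c : Fin n → Fin n → ℝ) (hc : ∀ α β, 0 ≤ c α β) :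
    -((n : ℝ)⁻¹ * ∑ α, ∑ β, a α β * c α β) ≤ 0 ∧
    (-((n : ℝ)⁻¹ * ∑ α, ∑ β, a α β * c α β) = 0 ↔ ∀ α β, c α β = 0) := by
  have hn' : (0:ℝ) < (n:ℝ)⁻¹ := by
    have : (0:ℝ) < n := by exact_mod_cast hn
    positivity
  have hterm : ∀ α β, 0 ≤ a α β * c α β := fun α β =>
    mul_nonneg (ha α β).le (hc α β)
  have hin : ∀ α ∈ Finset.univ, (0:ℝ) ≤ ∑ β, a α β * c α β := fun α _ =>
    Finset.sum_nonneg fun β _ => hterm α β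
  have hS : 0 ≤ ∑ α, ∑ β, a α β * c α β := Finset.sum_nonneg hin
  constructor
  · nlinarith
  · rw [neg_eq_zero, mul_eq_zero, or_iff_right hn'.ne',
      Finset.sum_eq_zero_iff_of_nonneg hin]
    constructor
    · intro h α β
      have h2 := (Finset.sum_eq_zero_iff_of_nonneg fun β _ => hterm α β).mp
        (h α (Finset.mem_univ α)) β (Finset.mem_univ β)
      rcases mul_eq_zero.mp h2 with h3 | h3
      · exact absurd h3 (ha α β).ne'
      · exact h3
    · intro h α _
      simp only [h, mul_zero, Finset.sum_const_zero]

theorem stmt12 (n d : ℕ) (hn : 1 ≤ n) (T₀ : ℝ)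
    (a : Fin n → Fin n → ℝ) (ha_symm : ∀ α β, a α β = a β α) (ha_pos : ∀ α β, 0 < a α β)
    (x u : Fin n → ℝ → EuclideanSpace ℝ (Fin d)) (T : Fin n → ℝ → ℝ)
    (hx : ∀ α t, HasDerivAt (x α) (u α t) t)
    (hu : ∀ α t, HasDerivAt (u α)
      ((n : ℝ)⁻¹ • ∑ β, a α β • (u β t - u α t)) t)
    (hT : ∀ α t, HasDerivAt (fun s => T α s + ‖u α s‖ ^ 2 / 2)
      ((n : ℝ)⁻¹ * ∑ β, a α β *
        ((T β t + ‖u β t‖ ^ 2 / 2) - (T α t + ‖u α t‖ ^ 2 / 2))) t) :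
    ∀ t,
      HasDerivAt (fun s => ∑ α, ‖u α s‖ ^ 2)
        (-((n : ℝ)⁻¹ * ∑ α, ∑ β, a α β * ‖u β t - u α t‖ ^ 2)) t ∧
      -((n : ℝ)⁻¹ * ∑ α, ∑ β, a α β * ‖u β t - u α t‖ ^ 2) ≤ 0 ∧
      (-((n : ℝ)⁻¹ * ∑ α, ∑ β, a α β * ‖u β t - u α t‖ ^ 2) = 0 ↔
        ∀ α β, u α t = u β t) ∧
      HasDerivAt (fun s => ∑ α, (T α s + ‖u α s‖ ^ 2 / 2 - T₀) ^ 2)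
        (-((n : ℝ)⁻¹ * ∑ α, ∑ β, a α β *
          ((T β t + ‖u β t‖ ^ 2 / 2 - T₀) - (T α t + ‖u α t‖ ^ 2 / 2 - T₀)) ^ 2)) t ∧
      -((n : ℝ)⁻¹ * ∑ α, ∑ β, a α β *
          ((T β t + ‖u β t‖ ^ 2 / 2 - T₀) - (T α t + ‖u α t‖ ^ 2 / 2 - T₀)) ^ 2) ≤ 0 ∧
      (-((n : ℝ)⁻¹ * ∑ α, ∑ β, a α β *
          ((T β t + ‖u β t‖ ^ 2 / 2 - T₀) - (T α t + ‖u α t‖ ^ 2 / 2 - T₀)) ^ 2) = 0 ↔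
        ∀ α β, T α t + ‖u α t‖ ^ 2 / 2 - T₀ = T β t + ‖u β t‖ ^ 2 / 2 - T₀) := by
  intro t
  set f : Fin n → ℝ := fun α => T α t + ‖u α t‖ ^ 2 / 2 - T₀ with hf
  -- velocity part derivative
  have hnorm : ∀ α : Fin n, HasDerivAt (fun s => ‖u α s‖ ^ 2)
      ((n : ℝ)⁻¹ * ∑ β, a α β * (2 * ((inner ℝ (u α t) (u β t) : ℝ) - ‖u α t‖ ^ 2))) t := by
    intro α
    have hinner := (hu α t).inner ℝ (hu α t)
    simp only [real_inner_self_eq_norm_sq] at hinner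
    convert hinner using 1
    case e'_4 => rfl
    case e'_5 => rfl
    rw [real_inner_smul_right, real_inner_smul_left, inner_sum, sum_inner, ← mul_add,
      ← Finset.sum_add_distrib]
    congr 1
    refine Finset.sum_congr rfl fun β _ => ?_
    rw [real_inner_smul_right, real_inner_smul_left, inner_sub_right, inner_sub_left,
      real_inner_self_eq_norm_sq, real_inner_comm (u β t) (u α t)]
    ring
  have hk1 : ∑ α, ∑ β, a α β * (2 * ((inner ℝ (u α t) (u β t) : ℝ) - ‖u α t‖ ^ 2))
      = -∑ α, ∑ β, a α β * ‖u β t - u α t‖ ^ 2 :=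
    key_pair a ha_symm (fun α => ‖u α t‖ ^ 2)
      (fun α β => (inner ℝ (u α t) (u β t) : ℝ)) (fun α β => ‖u β t - u α t‖ ^ 2)
      (fun α β => by
        have h1 : ‖u β t - u α t‖ ^ 2
            = ‖u β t‖ ^ 2 - 2 * (inner ℝ (u β t) (u α t) : ℝ) + ‖u α t‖ ^ 2 :=
          norm_sub_sq_real (u β t) (u α t)
        have h2 : (inner ℝ (u β t) (u α t) : ℝ) = (inner ℝ (u α t) (u β t) : ℝ) :=
          real_inner_comm _ _
        linarith)
  have hVder : HasDerivAt (fun s => ∑ α, ‖u α s‖ ^ 2)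
      (-((n : ℝ)⁻¹ * ∑ α, ∑ β, a α β * ‖u β t - u α t‖ ^ 2)) t := by
    have := HasDerivAt.fun_sum (fun α (_ : α ∈ Finset.univ) => hnorm α)
    convert this using 1
    case e'_4 => rfl
    case e'_5 => rfl
    rw [← Finset.mul_sum, hk1]
    ring
  -- energy part derivative
  have hEder1 : ∀ α : Fin n, HasDerivAt (fun s => T α s + ‖u α s‖ ^ 2 / 2 - T₀)
      ((n : ℝ)⁻¹ * ∑ β, a α β * (f β - f α)) t := by
    intro α
    have := (hT α t).sub_const T₀
    convert this using 2
    case e'_4 => rfl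
    case e'_5 => rfl
    refine Finset.sum_congr rfl fun β _ => ?_
    simp only [hf]
    ring
  have hEsq : ∀ α : Fin n, HasDerivAt (fun s => (T α s + ‖u α s‖ ^ 2 / 2 - T₀) ^ 2)
      (2 * f α * ((n : ℝ)⁻¹ * ∑ β, a α β * (f β - f α))) t := by
    intro α
    have := (hEder1 α).pow 2
    convert this using 1
    case e'_4 => rfl
    case e'_5 => rfl
    case e'_8 => rfl
    simp [hf]
  have hk2 : ∑ α, ∑ β, a α β * (2 * (f α * f β - f α ^ 2))
      = -∑ α, ∑ β, a α β * (f β - f α) ^ 2 :=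
    key_pair a ha_symm (fun α => f α ^ 2) (fun α β => f α * f β)
      (fun α β => (f β - f α) ^ 2) (fun α β => by ring)
  have hEder : HasDerivAt (fun s => ∑ α, (T α s + ‖u α s‖ ^ 2 / 2 - T₀) ^ 2)
      (-((n : ℝ)⁻¹ * ∑ α, ∑ β, a α β * (f β - f α) ^ 2)) t := by
    have := HasDerivAt.fun_sum (fun α (_ : α ∈ Finset.univ) => hEsq α)
    convert this using 1
    case e'_4 => rfl
    case e'_5 => rfl
    have expand : ∀ i : Fin n, 2 * f i * ((n : ℝ)⁻¹ * ∑ β, a i β * (f β - f i))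
        = (n : ℝ)⁻¹ * ∑ β, a i β * (2 * (f i * f β - f i ^ 2)) := by
      intro i
      rw [Finset.mul_sum, Finset.mul_sum, Finset.mul_sum]
      exact Finset.sum_congr rfl fun β _ => by ring
    rw [show -((n : ℝ)⁻¹ * ∑ α, ∑ β, a α β * (f β - f α) ^ 2)
        = (n : ℝ)⁻¹ * -∑ α, ∑ β, a α β * (f β - f α) ^ 2 from by ring, ← hk2,
      Finset.mul_sum]
    exact Finset.sum_congr rfl fun i _ => (expand i).symm
  obtain ⟨hVle, hViff⟩ := neg_sum_zero_iff hn a ha_pos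
    (fun α β => ‖u β t - u α t‖ ^ 2) (fun α β => by positivity)
  obtain ⟨hEle, hEiff⟩ := neg_sum_zero_iff hn a ha_pos
    (fun α β => (f β - f α) ^ 2) (fun α β => by positivity)
  refine ⟨hVder, hVle, ?_, hEder, hEle, ?_⟩
  · rw [hViff]
    constructor
    · intro h α β
      have := h β α
      rwa [pow_eq_zero_iff two_ne_zero, norm_eq_zero, sub_eq_zero] at this
    · intro h α β
      rw [pow_eq_zero_iff two_ne_zero, norm_eq_zero, sub_eq_zero]
      exact h β α
  · rw [hEiff]
    simp only [hf]
    constructor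
    · intro h α β
      have := h β α
      rwa [pow_eq_zero_iff two_ne_zero, sub_eq_zero] at this
    · intro h α β
      rw [pow_eq_zero_iff two_ne_zero, sub_eq_zero]
      exact h β α
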